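/- Let V be a finite-dimensional real vector space, R an algebraic curvature tensor on V, and K₂ : V⁴ → ℝ a multilinear form symmetric in its first two and last two arguments with K₂(X,X,X,P) = 0 for all X, P. Then the identity K₂(X,P,R(P,X)X,R(P,X)X) + K₂(X,X,R(P,X)X,R(X,P)P) = 0 for all X, P ∈ V implies the identity K₂(X,X,R(X,P)P,R(X,P)P) = K₂(P,P,R(P,X)X,R(P,X)X) for all X, P ∈ V, and conversely the latter identity implies the former. -/
import Mathlib


/-- for an algebraic curvature tensor R and a (0,4)-tensor K₂ symmetric in its
first two and last two slots with K₂(X,X,X,P)=0, the identity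
K₂(X,P,R(P,X)X,R(P,X)X) + K₂(X,X,R(P,X)X,R(X,P)P) = 0 (for all X,P) is equivalent to
K₂(X,X,R(X,P)P,R(X,P)P) = K₂(P,P,R(P,X)X,R(P,X)X) (for all X,P). -/
theorem stmt_13 {V : Type*} [AddCommGroup V] [Module ℝ V] [FiniteDimensional ℝ V]
    (R : V →ₗ[ℝ] V →ₗ[ℝ] V →ₗ[ℝ] V)
    (hskew : ∀ X Y : V, R X Y = -R Y X)
    (hbianchi : ∀ X Y Z : V, R X Y Z + R Y Z X + R Z X Y = 0)
    (K : MultilinearMap ℝ (fun _ : Fin 4 => V) ℝ)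
    (hs1 : ∀ X Y Z W : V, K ![X, Y, Z, W] = K ![Y, X, Z, W])
    (hs2 : ∀ X Y Z W : V, K ![X, Y, Z, W] = K ![X, Y, W, Z])
    (hvan : ∀ X P : V, K ![X, X, X, P] = 0) :
    (∀ X P : V, K ![X, P, R P X X, R P X X] + K ![X, X, R P X X, R X P P] = 0)
    ↔ (∀ X P : V, K ![X, X, R X P P, R X P P] = K ![P, P, R P X X, R P X X]) := by
  -- update lemmas
  have u0 : ∀ a b c d x : V, Function.update ![a, b, c, d] (0 : Fin 4) x = ![x, b, c, d] := by
    intro a b c d x; ext i; fin_cases i <;> simp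
  have u1 : ∀ a b c d x : V, Function.update ![a, b, c, d] (1 : Fin 4) x = ![a, x, c, d] := by
    intro a b c d x; ext i; fin_cases i <;> simp [Function.update]
  have u2 : ∀ a b c d x : V, Function.update ![a, b, c, d] (2 : Fin 4) x = ![a, b, x, d] := by
    intro a b c d x; ext i; fin_cases i <;> simp [Function.update]
  have u3 : ∀ a b c d x : V, Function.update ![a, b, c, d] (3 : Fin 4) x = ![a, b, c, x] := by
    intro a b c d x; ext i; fin_cases i <;> simp [Function.update]
  -- additivity lemmas
  have E1 : ∀ a a' b c d : V, K ![a + a', b, c, d] = K ![a, b, c, d] + K ![a', b, c, d] := by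
    intro a a' b c d; simpa [u0] using K.map_update_add ![a, b, c, d] 0 a a'
  have S1 : ∀ a a' b c d : V, K ![a - a', b, c, d] = K ![a, b, c, d] - K ![a', b, c, d] := by
    intro a a' b c d; simpa [u0] using K.map_update_sub ![a, b, c, d] 0 a a'
  have E2 : ∀ a b b' c d : V, K ![a, b + b', c, d] = K ![a, b, c, d] + K ![a, b', c, d] := by
    intro a b b' c d; simpa [u1] using K.map_update_add ![a, b, c, d] 1 b b'
  have S2 : ∀ a b b' c d : V, K ![a, b - b', c, d] = K ![a, b, c, d] - K ![a, b', c, d] := by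
    intro a b b' c d; simpa [u1] using K.map_update_sub ![a, b, c, d] 1 b b'
  have E3 : ∀ a b c c' d : V, K ![a, b, c + c', d] = K ![a, b, c, d] + K ![a, b, c', d] := by
    intro a b c c' d; simpa [u2] using K.map_update_add ![a, b, c, d] 2 c c'
  have S3 : ∀ a b c c' d : V, K ![a, b, c - c', d] = K ![a, b, c, d] - K ![a, b, c', d] := by
    intro a b c c' d; simpa [u2] using K.map_update_sub ![a, b, c, d] 2 c c'
  have E4 : ∀ a b c d d' : V, K ![a, b, c, d + d'] = K ![a, b, c, d] + K ![a, b, c, d'] := by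
    intro a b c d d'; simpa [u3] using K.map_update_add ![a, b, c, d] 3 d d'
  have S4 : ∀ a b c d d' : V, K ![a, b, c, d - d'] = K ![a, b, c, d] - K ![a, b, c, d'] := by
    intro a b c d d'; simpa [u3] using K.map_update_sub ![a, b, c, d] 3 d d'
  -- R X X = 0
  have hR0 : ∀ X : V, R X X = 0 := by
    intro X
    have h := hskew X X
    have h2 : (2 : ℝ) • R X X = 0 := by
      rw [two_smul]; nth_rewrite 1 [h]; abel
    have := smul_eq_zero.mp h2
    simpa using this
  -- curvature computations
  have e1 : ∀ X P : V, R (X + P) P P = R X P P := by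
    intro X P; simp [map_add, hR0]
  have e1' : ∀ X P : V, R (X - P) P P = R X P P := by
    intro X P; simp [map_sub, hR0]
  have e2 : ∀ X P : V, R P (X + P) (X + P) = R P X X - R X P P := by
    intro X P
    have w : R P X P = -R X P P := by rw [hskew P X]; simp
    simp [map_add, hR0, w]
    abel
  have e2' : ∀ X P : V, R P (X - P) (X - P) = R P X X + R X P P := by
    intro X P
    have w : R P X P = -R X P P := by rw [hskew P X]; simp
    simp [map_sub, hR0, w]
  constructor
  · -- A → B
    intro hA X P
    have h1 := hA (X + P) P
    have h2 := hA (X - P) P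
    rw [e1, e2] at h1
    rw [e1', e2'] at h2
    set u := R X P P with hu
    set v := R P X X with hv
    simp only [E1, S1, E2, S2, E3, S3, E4, S4] at h1 h2
    have a1 := hs1 X P v v
    have a2 := hs1 X P v u
    have a3 := hs1 X P u v
    have a4 := hs1 X P u u
    have b1 := hs2 X X v u
    have b2 := hs2 X P v u
    have b3 := hs2 P X v u
    have b4 := hs2 P P v u
    linarith
  · -- B → A
    intro hB
    have star : ∀ X P : V, K ![X, P, R X P P, R X P P] = -K ![P, P, R P X X, R X P P] := by
      intro X P
      have h1 := hB (X + P) P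
      have h2 := hB (X - P) P
      rw [e1, e2] at h1
      rw [e1', e2'] at h2
      set u := R X P P with hu
      set v := R P X X with hv
      simp only [E1, S1, E2, S2, E3, S3, E4, S4] at h1 h2
      have a4 := hs1 X P u u
      have b4 := hs2 P P v u
      linarith
    intro X P
    have h := star P X
    have a := hs1 X P (R P X X) (R P X X)
    have b := hs2 X X (R X P P) (R P X X)
    linarith
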